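/- Under the same metric subregularity assumption on g(x,y) = f(x) − y at (x̄, f(x̄), 0) with respect to D × E, and with f twice continuously Fréchet differentiable, for every x₁ ∈ X: T_B²(D, x̄, x₁) ∩ ∇f(x̄)⁻¹(T_U²(E, f(x̄), ∇f(x̄)(x₁)) − (1/2)∇²f(x̄)(x₁,x₁)) ⊂ T_B²(D ∩ f⁻¹(E), x̄, x₁). -/

import Mathlib

open Filter Topology Pointwise

section Defs

variable {X Y : Type*} [NormedAddCommGroup X] [NormedSpace ℝ X]
  [NormedAddCommGroup Y] [NormedSpace ℝ Y]

/-- A sequence of positive reals tending to zero. -/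
def PosToZero (t : ℕ → ℝ) : Prop := (∀ n, 0 < t n) ∧ Tendsto t atTop (𝓝 0)

/-- First order Bouligand tangent cone. -/
def TB (D : Set X) (x : X) : Set X :=
  {u | ∃ t : ℕ → ℝ, PosToZero t ∧ ∃ w : ℕ → X, Tendsto w atTop (𝓝 u) ∧
    ∀ n, x + t n • w n ∈ D}

/-- First order Ursescu tangent cone. -/
def TU (D : Set X) (x : X) : Set X :=
  {u | ∀ t : ℕ → ℝ, PosToZero t → ∃ w : ℕ → X, Tendsto w atTop (𝓝 u) ∧
    ∀ n, x + t n • w n ∈ D}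

/-- Second order Bouligand tangent set. -/
def TB2 (D : Set X) (x x₁ : X) : Set X :=
  {u | ∃ t : ℕ → ℝ, PosToZero t ∧ ∃ w : ℕ → X, Tendsto w atTop (𝓝 u) ∧
    ∀ n, x + t n • x₁ + (t n) ^ 2 • w n ∈ D}

/-- Second order Ursescu tangent set. -/
def TU2 (D : Set X) (x x₁ : X) : Set X :=
  {u | ∀ t : ℕ → ℝ, PosToZero t → ∃ w : ℕ → X, Tendsto w atTop (𝓝 u) ∧
    ∃ n₀ : ℕ, ∀ n ≥ n₀, x + t n • x₁ + (t n) ^ 2 • w n ∈ D}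

/-- Graph of a set-valued map. -/
def SVGraph (F : X → Set Y) : Set (X × Y) := {p | p.2 ∈ F p.1}

/-- First order Bouligand derivative. -/
def DB (F : X → Set Y) (x : X) (y : Y) (u : X) : Set Y :=
  {v | (u, v) ∈ TB (SVGraph F) (x, y)}

/-- First order Ursescu derivative. -/
def DU (F : X → Set Y) (x : X) (y : Y) (u : X) : Set Y :=
  {v | (u, v) ∈ TU (SVGraph F) (x, y)}

/-- Dini lower derivative. -/
def DD (F : X → Set Y) (x : X) (y : Y) (u : X) : Set Y :=
  {v | ∀ t : ℕ → ℝ, PosToZero t → ∀ w : ℕ → X, Tendsto w atTop (𝓝 u) →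
    ∃ v' : ℕ → Y, Tendsto v' atTop (𝓝 v) ∧
      ∃ n₀ : ℕ, ∀ n ≥ n₀, y + t n • v' n ∈ F (x + t n • w n)}

/-- Aubin property of a set-valued map around a point of its graph. -/
def AubinProperty (F : X → Set Y) (x : X) (y : Y) : Prop :=
  ∃ L > (0:ℝ), ∃ r > (0:ℝ), ∀ x' x'' : X, ‖x' - x‖ ≤ r → ‖x'' - x‖ ≤ r →
    ∀ y' ∈ F x', ‖y' - y‖ ≤ r → ∃ y'' ∈ F x'', ‖y' - y''‖ ≤ L * ‖x' - x''‖

end Defs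


section Aux2
variable {X Y : Type*} [NormedAddCommGroup X] [NormedSpace ℝ X]
  [NormedAddCommGroup Y] [NormedSpace ℝ Y]

lemma taylor2 {f : X → Y} (hf : ContDiff ℝ 2 f) (x : X) {ε : ℝ} (hε : 0 < ε) :
    ∃ δ > (0:ℝ), ∀ h : X, ‖h‖ ≤ δ →
      ‖f (x + h) - f x - fderiv ℝ f x h - (2⁻¹ : ℝ) • fderiv ℝ (fderiv ℝ f) x h h‖
        ≤ ε * ‖h‖ ^ 2 := by
  set A := fderiv ℝ f with hA
  set B := fderiv ℝ A x with hB
  have hdf : ∀ y, HasFDerivAt f (A y) y := fun y =>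
    ((hf.differentiable (by norm_num)) y).hasFDerivAt
  have hA1 : ContDiff ℝ 1 A := hf.fderiv_right (by norm_num)
  have hdA : HasFDerivAt A B x := ((hA1.differentiable (by norm_num)) x).hasFDerivAt
  have hsymm : ∀ v w : X, B v w = B w v := second_derivative_symmetric hdf hdA
  set g : X → Y := fun h => f (x + h) - f x - A x h - (2⁻¹:ℝ) • B h h with hg
  have hg0 : g 0 = 0 := by simp [hg]
  have hdg : ∀ h : X, HasFDerivAt g (A (x + h) - A x - B h) h := by
    intro h
    have h1 : HasFDerivAt (fun h : X => f (x + h)) (A (x + h)) h := by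
      have := (hdf (x + h)).comp h ((hasFDerivAt_id h).const_add x)
      simpa [Function.comp_def] using this
    have h2 : HasFDerivAt (fun h : X => A x h) (A x) h := (A x).hasFDerivAt
    have h3 : HasFDerivAt (fun h : X => B h h) ((B h) + B.flip h) h := by
      have := (B.hasFDerivAt (x := h)).clm_apply (hasFDerivAt_id h)
      simpa using this
    have h3' : HasFDerivAt (fun h : X => (2⁻¹:ℝ) • B h h)
        ((2⁻¹:ℝ) • ((B h) + B.flip h)) h := h3.const_smul _
    have := ((h1.sub_const (f x)).sub h2).sub h3'
    convert this using 1
    · rfl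
    ext k
    have := hsymm k h
    simp only [ContinuousLinearMap.sub_apply, ContinuousLinearMap.smul_apply,
      ContinuousLinearMap.add_apply, ContinuousLinearMap.flip_apply]
    rw [this]
    module
  rw [hasFDerivAt_iff_isLittleO_nhds_zero] at hdA
  have hev := hdA.def hε
  rw [Metric.eventually_nhds_iff] at hev
  obtain ⟨δ, hδ, hball⟩ := hev
  refine ⟨δ/2, by positivity, fun h hh => ?_⟩
  have bound : ∀ h' ∈ Metric.closedBall (0:X) ‖h‖, ‖A (x + h') - A x - B h'‖ ≤ ε * ‖h‖ := by
    intro h' hh'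
    rw [Metric.mem_closedBall, dist_zero_right] at hh'
    have h'small : dist h' (0:X) < δ := by
      rw [dist_zero_right]; linarith
    have := hball h'small
    calc ‖A (x + h') - A x - B h'‖ ≤ ε * ‖h'‖ := this
      _ ≤ ε * ‖h‖ := by nlinarith
  have := (convex_closedBall (0:X) ‖h‖).norm_image_sub_le_of_norm_hasFDerivWithin_le
    (fun h' _ => (hdg h').hasFDerivWithinAt) bound
    (Metric.mem_closedBall_self (norm_nonneg h))
    (by rw [Metric.mem_closedBall, dist_zero_right])
  rw [hg0, sub_zero, sub_zero] at this
  calc ‖f (x + h) - f x - A x h - (2⁻¹:ℝ) • B h h‖ = ‖g h‖ := rfl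
    _ ≤ ε * ‖h‖ * ‖h‖ := this
    _ = ε * ‖h‖^2 := by ring

end Aux2

set_option maxHeartbeats 1000000 in
theorem tb2_inter_subregular {X Y : Type*}
    [NormedAddCommGroup X] [NormedSpace ℝ X] [CompleteSpace X]
    [NormedAddCommGroup Y] [NormedSpace ℝ Y] [CompleteSpace Y]
    (D : Set X) (E : Set Y) (hD : IsClosed D) (hE : IsClosed E)
    (f : X → Y) (hf : ContDiff ℝ 2 f) (xb : X) (hxb : xb ∈ D ∩ f ⁻¹' E)
    (hsub : ∃ s > (0:ℝ), ∃ μ > (0:ℝ), ∀ x ∈ D, ∀ y ∈ E,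
      ‖x - xb‖ < s → ‖y - f xb‖ < s → ∀ ε > (0:ℝ),
        ∃ a ∈ D, ∃ b ∈ E, f a = b ∧ ‖x - a‖ + ‖y - b‖ < μ * ‖f x - y‖ + ε)
    (x₁ : X) :
    TB2 D xb x₁ ∩ (fderiv ℝ f xb) ⁻¹'
      ((fun z => z - (2⁻¹ : ℝ) • (fderiv ℝ (fderiv ℝ f) xb x₁ x₁)) ''
        TU2 E (f xb) (fderiv ℝ f xb x₁))
      ⊆ TB2 (D ∩ f ⁻¹' E) xb x₁ := by
  obtain ⟨s, hs, μ, hμ, hreg⟩ := hsub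
  rintro u ⟨⟨t, ht, w, hw, hwD⟩, v, hvTU, hv_eq⟩
  set A : X →L[ℝ] Y := fderiv ℝ f xb with hAdef
  set B := fderiv ℝ (fderiv ℝ f) xb with hBdef
  -- hv_eq : v - 2⁻¹ • B x₁ x₁ = A u
  obtain ⟨vs, hvs, n₁, hvsE⟩ := hvTU t ht
  have ht0 : ∀ n, t n ≠ 0 := fun n => (ht.1 n).ne'
  have ht2 : ∀ n, (t n) ^ 2 ≠ 0 := fun n => pow_ne_zero 2 (ht0 n)
  have ht2pos : ∀ n, (0:ℝ) < (t n)^2 := fun n => pow_pos (ht.1 n) 2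
  set hh : ℕ → X := fun n => t n • x₁ + t n ^ 2 • w n with hhdef
  set xn : ℕ → X := fun n => xb + hh n with hxndef
  set yn : ℕ → Y := fun n => f xb + t n • A x₁ + t n ^ 2 • vs n with hyndef
  have hxnD : ∀ n, xn n ∈ D := by
    intro n
    have := hwD n
    simpa [hxndef, hhdef, add_assoc] using this
  set Rem : ℕ → Y := fun n =>
    f (xb + hh n) - f xb - A (hh n) - (2⁻¹:ℝ) • B (hh n) (hh n) with hRemdef
  set sn : ℕ → Y := fun n =>
    (2⁻¹:ℝ) • (B x₁ (w n) + B (w n) x₁ + t n • B (w n) (w n)) with hsndef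
  set c : ℕ → Y := fun n => (t n ^ 2)⁻¹ • (f (xn n) - yn n) with hcdef
  have hceq : ∀ n, f (xn n) - yn n = (t n ^ 2) • c n := fun n =>
    (smul_inv_smul₀ (ht2 n) _).symm
  have expand : ∀ n, f (xn n) - yn n
      = Rem n + (t n ^ 2) • (A (w n) + (2⁻¹:ℝ) • B x₁ x₁ - vs n) + (t n ^ 3) • sn n := by
    intro n
    simp only [hRemdef, hsndef, hxndef, hyndef, hhdef, map_add, map_smul,
      ContinuousLinearMap.add_apply, ContinuousLinearMap.smul_apply, smul_add, smul_smul]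
    module
  have cexp : ∀ n, c n
      = (t n ^ 2)⁻¹ • Rem n + (A (w n) + (2⁻¹:ℝ) • B x₁ x₁ - vs n) + t n • sn n := by
    intro n
    have h32 : (t n ^ 2)⁻¹ * t n ^ 3 = t n := by
      rw [show t n ^ 3 = t n ^ 2 * t n by ring, ← mul_assoc,
        inv_mul_cancel₀ (ht2 n), one_mul]
    rw [hcdef]
    simp only
    rw [expand n, smul_add, smul_add, inv_smul_smul₀ (ht2 n), smul_smul, h32]
  -- limits
  have hhlim : Tendsto hh atTop (𝓝 0) := by
    have h1 : Tendsto (fun n => t n • x₁) atTop (𝓝 ((0:ℝ) • x₁)) :=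
      ht.2.smul tendsto_const_nhds
    have h2 : Tendsto (fun n => t n ^ 2 • w n) atTop (𝓝 ((0:ℝ)^2 • u)) :=
      (ht.2.pow 2).smul hw
    simpa [hhdef] using h1.add h2
  have l1 : Tendsto (fun n => (t n ^ 2)⁻¹ • Rem n) atTop (𝓝 0) := by
    rw [NormedAddCommGroup.tendsto_nhds_zero]
    intro ε hε
    set M : ℝ := ‖x₁‖ + 1 with hM
    have hMpos : (0:ℝ) < M := by positivity
    have hε' : (0:ℝ) < ε / (2 * M ^ 2) := by positivity
    obtain ⟨δ, hδ, htay⟩ := taylor2 hf xb hε'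
    have e1 : ∀ᶠ n in atTop, ‖hh n‖ ≤ δ := by
      have := (NormedAddCommGroup.tendsto_nhds_zero.mp hhlim) δ hδ
      filter_upwards [this] with n hn using hn.le
    have e2 : ∀ᶠ n in atTop, t n * ‖w n‖ ≤ 1 := by
      have hlim : Tendsto (fun n => t n * ‖w n‖) atTop (𝓝 (0 * ‖u‖)) :=
        ht.2.mul (hw.norm)
      rw [zero_mul] at hlim
      have := (hlim.eventually (eventually_le_nhds (by norm_num : (0:ℝ) < 1)))
      filter_upwards [this] with n hn using hn
    filter_upwards [e1, e2] with n h1n h2n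
    have hrem : ‖Rem n‖ ≤ (ε / (2 * M ^ 2)) * ‖hh n‖ ^ 2 := htay _ h1n
    have hb : ‖hh n‖ ≤ t n * M := by
      have : ‖hh n‖ ≤ t n * ‖x₁‖ + t n ^ 2 * ‖w n‖ := by
        calc ‖hh n‖ ≤ ‖t n • x₁‖ + ‖t n ^ 2 • w n‖ := norm_add_le _ _
          _ = t n * ‖x₁‖ + t n ^ 2 * ‖w n‖ := by
              rw [norm_smul, norm_smul, Real.norm_eq_abs, Real.norm_eq_abs,
                abs_of_pos (ht.1 n), abs_of_pos (ht2pos n)]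
      have h2 : t n ^ 2 * ‖w n‖ = t n * (t n * ‖w n‖) := by ring
      have h3 : t n * (t n * ‖w n‖) ≤ t n * 1 :=
        mul_le_mul_of_nonneg_left h2n (ht.1 n).le
      calc ‖hh n‖ ≤ t n * ‖x₁‖ + t n ^ 2 * ‖w n‖ := this
        _ ≤ t n * ‖x₁‖ + t n * 1 := by rw [h2]; linarith
        _ = t n * M := by rw [hM]; ring
    have hnorm : ‖(t n ^ 2)⁻¹ • Rem n‖ = (t n ^ 2)⁻¹ * ‖Rem n‖ := by
      rw [norm_smul, Real.norm_eq_abs, abs_of_pos (inv_pos.mpr (ht2pos n))]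
    have hhsq : ‖hh n‖ ^ 2 ≤ t n ^ 2 * M ^ 2 := by
      calc ‖hh n‖ ^ 2 ≤ (t n * M) ^ 2 := pow_le_pow_left₀ (norm_nonneg _) hb 2
        _ = t n ^ 2 * M ^ 2 := by ring
    have hfin : (t n ^ 2)⁻¹ * ‖Rem n‖ ≤ ε / 2 := by
      have htp := ht2pos n
      have : ‖Rem n‖ ≤ (ε / (2 * M ^ 2)) * (t n ^ 2 * M ^ 2) :=
        le_trans hrem (mul_le_mul_of_nonneg_left hhsq hε'.le)
      rw [inv_mul_le_iff₀ htp]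
      calc ‖Rem n‖ ≤ (ε / (2 * M ^ 2)) * (t n ^ 2 * M ^ 2) := this
        _ = t n ^ 2 * (ε / 2) := by field_simp
    rw [hnorm]
    linarith
  have l2 : Tendsto (fun n => A (w n) + (2⁻¹:ℝ) • B x₁ x₁ - vs n) atTop (𝓝 0) := by
    have h1 : Tendsto (fun n => A (w n)) atTop (𝓝 (A u)) :=
      (A.continuous.tendsto u).comp hw
    have := (h1.add_const ((2⁻¹:ℝ) • (B x₁) x₁)).sub hvs
    have heq : A u + (2⁻¹:ℝ) • B x₁ x₁ - v = 0 := by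
      rw [← hv_eq]; simp
    rwa [heq] at this
  have l3 : Tendsto (fun n => t n • sn n) atTop (𝓝 0) := by
    have hc1 : Continuous fun y : X => B y x₁ := B.continuous.clm_apply continuous_const
    have hc2 : Continuous fun y : X => B y y := B.continuous.clm_apply continuous_id
    have hsn : Tendsto sn atTop
        (𝓝 ((2⁻¹:ℝ) • (B x₁ u + B u x₁ + (0:ℝ) • B u u))) := by
      apply Tendsto.const_smul
      exact (((B x₁).continuous.tendsto u).comp hw |>.add
        ((hc1.tendsto u).comp hw)).add (ht.2.smul ((hc2.tendsto u).comp hw))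
    have := ht.2.smul hsn
    simpa using this
  have hclim : Tendsto c atTop (𝓝 0) := by
    have := (l1.add l2).add l3
    simp only [add_zero] at this
    convert this using 1
    funext n
    exact cexp n
  -- eventual conditions
  have hxlim : Tendsto xn atTop (𝓝 xb) := by
    have := tendsto_const_nhds.add hhlim (f := fun _ : ℕ => xb)
    simpa [hxndef] using this
  have hylim : Tendsto yn atTop (𝓝 (f xb)) := by
    have h1 : Tendsto (fun n => t n • A x₁) atTop (𝓝 ((0:ℝ) • A x₁)) :=
      ht.2.smul tendsto_const_nhds
    have h2 : Tendsto (fun n => t n ^ 2 • vs n) atTop (𝓝 ((0:ℝ)^2 • v)) :=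
      (ht.2.pow 2).smul hvs
    have := (tendsto_const_nhds (x := f xb) (f := atTop)).add (h1.add h2)
    simpa [hyndef, ← add_assoc] using this
  have e1 : ∀ᶠ n in atTop, ‖xn n - xb‖ < s := by
    have : Tendsto (fun n => xn n - xb) atTop (𝓝 0) :=
      tendsto_sub_nhds_zero_iff.mpr hxlim
    exact (NormedAddCommGroup.tendsto_nhds_zero.mp this) s hs
  have e2 : ∀ᶠ n in atTop, ‖yn n - f xb‖ < s := by
    have : Tendsto (fun n => yn n - f xb) atTop (𝓝 0) :=
      tendsto_sub_nhds_zero_iff.mpr hylim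
    exact (NormedAddCommGroup.tendsto_nhds_zero.mp this) s hs
  have e3 : ∀ᶠ n in atTop, n ≥ n₁ := eventually_ge_atTop n₁
  obtain ⟨N, hN⟩ := eventually_atTop.mp ((e1.and e2).and e3)
  have H : ∀ k : ℕ, ∃ a ∈ D, ∃ b ∈ E, f a = b ∧
      ‖xn (k + N) - a‖ + ‖yn (k + N) - b‖
        < μ * ‖f (xn (k + N)) - yn (k + N)‖ + t (k + N) ^ 3 := by
    intro k
    have hk : k + N ≥ N := Nat.le_add_left N k
    obtain ⟨⟨hx1, hy1⟩, hn1⟩ := hN (k + N) hk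
    exact hreg (xn (k + N)) (hxnD _) (yn (k + N)) (hvsE _ hn1) hx1 hy1
      (t (k + N) ^ 3) (pow_pos (ht.1 _) 3)
  choose a haD b hbE hfab hlt using H
  set t' : ℕ → ℝ := fun k => t (k + N) with ht'def
  set u' : ℕ → X := fun k => (t' k ^ 2)⁻¹ • (a k - xb - t' k • x₁) with hu'def
  have hmem : ∀ k, xb + t' k • x₁ + t' k ^ 2 • u' k = a k := by
    intro k
    rw [hu'def]
    simp only
    rw [smul_inv_smul₀ (ht2 _)]
    abel
  have hu'eq : ∀ k, u' k = w (k + N) + (t' k ^ 2)⁻¹ • (a k - xn (k + N)) := by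
    intro k
    have h1 : a k - xb - t' k • x₁ = (a k - xn (k + N)) + t' k ^ 2 • w (k + N) := by
      simp only [hxndef, hhdef, ht'def]
      abel
    rw [hu'def]
    simp only
    rw [h1, smul_add, inv_smul_smul₀ (ht2 _)]
    abel
  have hnormc : ∀ m, ‖f (xn m) - yn m‖ = t m ^ 2 * ‖c m‖ := by
    intro m
    rw [hceq m, norm_smul, Real.norm_eq_abs, abs_of_pos (ht2pos m)]
  have hu'lim : Tendsto u' atTop (𝓝 u) := by
    have hwshift : Tendsto (fun k => w (k + N)) atTop (𝓝 u) :=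
      hw.comp (tendsto_add_atTop_nat N)
    have hsecond : Tendsto (fun k => (t' k ^ 2)⁻¹ • (a k - xn (k + N))) atTop (𝓝 0) := by
      apply squeeze_zero_norm (a := fun k => μ * ‖c (k + N)‖ + t' k)
      · intro k
        have hlt' := hlt k
        have hb1 : ‖a k - xn (k + N)‖ ≤ μ * ‖f (xn (k + N)) - yn (k + N)‖ + t (k + N) ^ 3 := by
          rw [norm_sub_rev]
          have := norm_nonneg (yn (k + N) - b k)
          linarith
        rw [hnormc] at hb1
        have htp := ht2pos (k + N)
        have htpos := ht.1 (k + N)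
        have hnn : ‖(t' k ^ 2)⁻¹ • (a k - xn (k + N))‖
            = (t (k + N) ^ 2)⁻¹ * ‖a k - xn (k + N)‖ := by
          rw [norm_smul, Real.norm_eq_abs, ht'def, abs_of_pos (by positivity)]
        rw [hnn, ht'def]
        simp only
        rw [inv_mul_le_iff₀ htp]
        have hcnn := norm_nonneg (c (k + N))
        calc ‖a k - xn (k + N)‖ ≤ μ * (t (k + N) ^ 2 * ‖c (k + N)‖) + t (k + N) ^ 3 := hb1
          _ = t (k + N) ^ 2 * (μ * ‖c (k + N)‖ + t (k + N)) := by ring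
      · have hcshift : Tendsto (fun k => ‖c (k + N)‖) atTop (𝓝 0) := by
          have := (hclim.comp (tendsto_add_atTop_nat N)).norm
          simpa using this
        have htshift : Tendsto t' atTop (𝓝 0) := ht.2.comp (tendsto_add_atTop_nat N)
        have := (hcshift.const_mul μ).add htshift
        simpa using this
    have := hwshift.add hsecond
    rw [add_zero] at this
    convert this using 1
    funext k
    exact hu'eq k
  refine ⟨t', ⟨fun k => ht.1 _, ht.2.comp (tendsto_add_atTop_nat N)⟩, u', hu'lim, ?_⟩
  intro k
  rw [hmem k]
  exact ⟨haD k, by simp only [Set.mem_preimage]; rw [hfab k]; exact hbE k⟩
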